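/- Fix reals a ∈ (0,1), b ∈ (0,1], s > 0, ϰ > 1 and an integer k ≥ 1. Define ū := sup{u : 0 < u < k and a(b(max{u/s,1})^{2u}(1/ϰ)^u)^{1/(k−u)} < 1}, and for u ∈ [0, ū) define ζ(u) := (1 − a(b(max{u/s,1})^{2u}(1/ϰ)^u)^{1/(k−u)})^{k−u}. If k ≥ 2 ln(1/b) + 2√ϰ s, then sup_{u∈[0,ū)} ζ(u) ≤ exp(−(a/2)(k − √ϰ s)); if in addition a ≤ 1/3, then sup_{u∈[0,ū)} ζ(u) ≤ (1 − a/2)^{k − √ϰ s}. -/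

import Mathlib

noncomputable section

open scoped BigOperators Classical

/-- Vectors in `ℝⁿ` with the Euclidean norm. -/
abbrev V (n : ℕ) := EuclideanSpace ℝ (Fin n)

/-- The Euclidean dot product `uᵀv`. -/
def dot {n : ℕ} (u v : V n) : ℝ := ∑ i, u i * v i

/-- The Hessian quadratic form `dᵀ∇²f(x)d`. -/
def hessQ {n : ℕ} (f : V n → ℝ) (x d : V n) : ℝ := iteratedFDeriv ℝ 2 f x ![d, d]

/-- The weighted norm `‖d‖ₓ = (dᵀ∇²f(x)d)^{1/2}`. -/
def wnorm {n : ℕ} (f : V n → ℝ) (x d : V n) : ℝ := Real.sqrt (hessQ f x d)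

/-- `f` is `μ`-strongly convex. -/
def StrongConvex {n : ℕ} (μ : ℝ) (f : V n → ℝ) : Prop :=
  ∀ x y : V n, ∀ l : ℝ, 0 ≤ l → l ≤ 1 →
    f (l • x + (1 - l) • y) ≤ l * f x + (1 - l) * f y - l * (1 - l) * μ / 2 * ‖x - y‖ ^ 2

/-- `f` has `L`-Lipschitz continuous gradient. -/
def LipschitzGrad {n : ℕ} (L : ℝ) (f : V n → ℝ) : Prop :=
  ∀ x y : V n, ‖gradient f x - gradient f y‖ ≤ L * ‖x - y‖

/-- `f` is `M`-self-concordant: `|D³f(x)[d,d,d]| ≤ 2M (dᵀ∇²f(x)d)^{3/2}`. -/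
def SelfConcordant {n : ℕ} (M : ℝ) (f : V n → ℝ) : Prop :=
  ∀ x d : V n, |iteratedFDeriv ℝ 3 f x ![d, d, d]| ≤ 2 * M * hessQ f x d ^ ((3 : ℝ) / 2)

/-- `f` has `L₂`-Lipschitz continuous Hessian. -/
def LipschitzHessian {n : ℕ} (L₂ : ℝ) (f : V n → ℝ) : Prop :=
  ∀ x y : V n, ‖iteratedFDeriv ℝ 2 f x - iteratedFDeriv ℝ 2 f y‖ ≤ L₂ * ‖x - y‖

/-- `ω(z) = z - ln(1+z)`. -/
def omegaFn (z : ℝ) : ℝ := z - Real.log (1 + z)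

/-- `ω⋆(z) = -z - ln(1-z)`. -/
def omegaStar (z : ℝ) : ℝ := -z - Real.log (1 - z)

/-- Matrix–vector multiplication acting on Euclidean space. -/
def mulv {n : ℕ} (A : Matrix (Fin n) (Fin n) ℝ) (v : V n) : V n :=
  (EuclideanSpace.equiv (Fin n) ℝ).symm (A.mulVec (EuclideanSpace.equiv (Fin n) ℝ v))

/-- `g_k = ∇f(x_k)`. -/
def gvec {n : ℕ} (f : V n → ℝ) (x : ℕ → V n) (k : ℕ) : V n := gradient f (x k)

/-- `d_k = -B_k⁻¹ g_k`. -/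
def dvec {n : ℕ} (f : V n → ℝ) (x : ℕ → V n) (B : ℕ → Matrix (Fin n) (Fin n) ℝ) (k : ℕ) : V n :=
  -(mulv (B k)⁻¹ (gvec f x k))

/-- `η_k = -g_kᵀd_k / ‖d_k‖_{x_k}`. -/
def etaSeq {n : ℕ} (f : V n → ℝ) (x : ℕ → V n) (B : ℕ → Matrix (Fin n) (Fin n) ℝ) (k : ℕ) : ℝ :=
  -(dot (gvec f x k) (dvec f x B k)) / wnorm f (x k) (dvec f x B k)

/-- The adaptive step size `t_k = η_k / ((1 + M η_k) ‖d_k‖_{x_k})`. -/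
def tSeq {n : ℕ} (f : V n → ℝ) (M : ℝ) (x : ℕ → V n) (B : ℕ → Matrix (Fin n) (Fin n) ℝ)
    (k : ℕ) : ℝ :=
  etaSeq f x B k / ((1 + M * etaSeq f x B k) * wnorm f (x k) (dvec f x B k))

/-- `s_k = x_{k+1} - x_k`. -/
def svec {n : ℕ} (x : ℕ → V n) (k : ℕ) : V n := x (k + 1) - x k

/-- `y_k = g_{k+1} - g_k`. -/
def yvec {n : ℕ} (f : V n → ℝ) (x : ℕ → V n) (k : ℕ) : V n := gvec f x (k + 1) - gvec f x k

/-- The outer product `u vᵀ`. -/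
def outer {n : ℕ} (u v : V n) : Matrix (Fin n) (Fin n) ℝ := Matrix.of fun i j => u i * v j

/-- The adaptive BFGS method (Algorithm 1). -/
structure AdaptiveBFGS {n : ℕ} (f : V n → ℝ) (M : ℝ) (x : ℕ → V n)
    (B : ℕ → Matrix (Fin n) (Fin n) ℝ) : Prop where
  posdef : (B 0).PosDef
  step : ∀ k, x (k + 1) = x k + tSeq f M x B k • dvec f x B k
  update : ∀ k, B (k + 1) =
    B k - (dot (svec x k) (mulv (B k) (svec x k)))⁻¹ • (B k * outer (svec x k) (svec x k) * B k)
      + (dot (yvec f x k) (svec x k))⁻¹ • outer (yvec f x k) (yvec f x k)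

/-- `α_k = ‖d_k‖_{x_k} / (√L ‖d_k‖)`. -/
def alphaSeq {n : ℕ} (f : V n → ℝ) (L : ℝ) (x : ℕ → V n) (B : ℕ → Matrix (Fin n) (Fin n) ℝ)
    (k : ℕ) : ℝ :=
  wnorm f (x k) (dvec f x B k) / (Real.sqrt L * ‖dvec f x B k‖)

/-- The smoothness aided adaptive step size `t̃_k`. -/
def ttSeq {n : ℕ} (f : V n → ℝ) (M L : ℝ) (x : ℕ → V n) (B : ℕ → Matrix (Fin n) (Fin n) ℝ)
    (k : ℕ) : ℝ :=
  if (1 + M * etaSeq f x B k) * alphaSeq f L x B k ≤ 1 then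
    etaSeq f x B k / ((1 + M * etaSeq f x B k) * wnorm f (x k) (dvec f x B k))
  else
    (M * etaSeq f x B k * alphaSeq f L x B k ^ 2 + (1 - alphaSeq f L x B k) ^ 2)
      / (M * wnorm f (x k) (dvec f x B k))

/-- The smoothness aided adaptive BFGS method SA²-BFGS (Algorithm 3). -/
structure SA2BFGS {n : ℕ} (f : V n → ℝ) (M L : ℝ) (x : ℕ → V n)
    (B : ℕ → Matrix (Fin n) (Fin n) ℝ) : Prop where
  posdef : (B 0).PosDef
  step : ∀ k, x (k + 1) = x k + ttSeq f M L x B k • dvec f x B k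
  update : ∀ k, B (k + 1) =
    B k - (dot (svec x k) (mulv (B k) (svec x k)))⁻¹ • (B k * outer (svec x k) (svec x k) * B k)
      + (dot (yvec f x k) (svec x k))⁻¹ • outer (yvec f x k) (yvec f x k)

/-- The positive semidefinite square root (Mathlib's former `Matrix.PosSemidef.sqrt`, since removed). -/
def Matrix.PosSemidef.sqrt {n : Type*} [Fintype n] [DecidableEq n]
    {A : Matrix n n ℝ} (hA : A.PosSemidef) : Matrix n n ℝ :=
  hA.1.eigenvectorUnitary.1 * Matrix.diagonal ((↑) ∘ Real.sqrt ∘ hA.1.eigenvalues) *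
    (star hA.1.eigenvectorUnitary : Matrix n n ℝ)

/-- `ĝ_k = P^{-1/2} g_k`. -/
def hatg {n : ℕ} (f : V n → ℝ) (x : ℕ → V n) (P : Matrix (Fin n) (Fin n) ℝ) (hP : P.PosDef)
    (k : ℕ) : V n :=
  mulv (hP.posSemidef.sqrt)⁻¹ (gvec f x k)

/-- `ŝ_k = P^{1/2} s_k`. -/
def hats {n : ℕ} (x : ℕ → V n) (P : Matrix (Fin n) (Fin n) ℝ) (hP : P.PosDef) (k : ℕ) : V n :=
  mulv hP.posSemidef.sqrt (svec x k)

/-- `ŷ_k = P^{-1/2} y_k`. -/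
def haty {n : ℕ} (f : V n → ℝ) (x : ℕ → V n) (P : Matrix (Fin n) (Fin n) ℝ) (hP : P.PosDef)
    (k : ℕ) : V n :=
  mulv (hP.posSemidef.sqrt)⁻¹ (yvec f x k)

/-- `cos θ̂_k = -ĝ_kᵀŝ_k / (‖ĝ_k‖ ‖ŝ_k‖)`. -/
def cosθ {n : ℕ} (f : V n → ℝ) (x : ℕ → V n) (P : Matrix (Fin n) (Fin n) ℝ) (hP : P.PosDef)
    (k : ℕ) : ℝ :=
  -(dot (hatg f x P hP k) (hats x P hP k)) / (‖hatg f x P hP k‖ * ‖hats x P hP k‖)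

/-- `m̂_k = ŷ_kᵀŝ_k / ‖ŝ_k‖²`. -/
def mhat {n : ℕ} (f : V n → ℝ) (x : ℕ → V n) (P : Matrix (Fin n) (Fin n) ℝ) (hP : P.PosDef)
    (k : ℕ) : ℝ :=
  dot (haty f x P hP k) (hats x P hP k) / ‖hats x P hP k‖ ^ 2

/-- `q̂_k = ‖ĝ_k‖² / (f(x_k) - f(x*))`. -/
def qhat {n : ℕ} (f : V n → ℝ) (x : ℕ → V n) (xstar : V n) (P : Matrix (Fin n) (Fin n) ℝ)
    (hP : P.PosDef) (k : ℕ) : ℝ :=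
  ‖hatg f x P hP k‖ ^ 2 / (f (x k) - f xstar)

/-- The potential function `Ψ(A) = tr(A) - ln det(A) - n`. -/
def Psi {n : ℕ} (A : Matrix (Fin n) (Fin n) ℝ) : ℝ := A.trace - Real.log A.det - n

/-- The Hessian matrix `∇²f(x)` in the standard basis. -/
def hessMatrix {n : ℕ} (f : V n → ℝ) (x : V n) : Matrix (Fin n) (Fin n) ℝ :=
  Matrix.of fun i j =>
    iteratedFDeriv ℝ 2 f x ![EuclideanSpace.single i (1 : ℝ), EuclideanSpace.single j (1 : ℝ)]

lemma aux_loglb (x : ℝ) (h0 : 0 ≤ x) (h2 : x ≤ 1/2) :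
    -(2*x) ≤ Real.log (1 - x) := by
  have h1 : (0:ℝ) < 1 - x := by linarith
  have h := Real.log_le_sub_one_of_pos (show (0:ℝ) < (1-x)⁻¹ by positivity)
  rw [Real.log_inv] at h
  have hinv : (1-x) * (1-x)⁻¹ = 1 := mul_inv_cancel₀ (ne_of_gt h1)
  nlinarith [h1, h]

lemma aux_logub (t : ℝ) (ht : 1 ≤ t) : 1 + 2 * Real.log t ≤ 3/2 * t := by
  have ht0 : (0:ℝ) < t := by linarith
  have hp : Real.sqrt t ^ 2 = t := Real.sq_sqrt (le_of_lt ht0)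
  have hlog : Real.log t = 2 * Real.log (Real.sqrt t) := by
    rw [Real.log_sqrt (le_of_lt ht0)]; ring
  have hl : Real.log (Real.sqrt t) ≤ Real.sqrt t - 1 :=
    Real.log_le_sub_one_of_pos (by positivity)
  nlinarith [sq_nonneg (Real.sqrt t - 4/3)]

-- φ bound lemma
lemma aux_keyB (b s ϰ K u : ℝ) (hb : 0 < b) (hb1 : b ≤ 1) (hs : 0 < s) (hϰ : 1 < ϰ)
    (hu : 0 ≤ u) (hkbig : 2 * Real.log (1/b) + 2 * Real.sqrt ϰ * s ≤ K) :
    (K - Real.sqrt ϰ * s)/2 ≤ (K - u) + Real.log b + 2*u*Real.log (max (u/s) 1) - u * Real.log ϰ := by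
  have hϰ0 : (0:ℝ) < ϰ := by linarith
  have hsq1 : 1 < Real.sqrt ϰ := by
    rw [show (1:ℝ) = Real.sqrt 1 by simp]
    exact Real.sqrt_lt_sqrt (by norm_num) hϰ
  have hlogϰ : 0 < Real.log ϰ := Real.log_pos hϰ
  have hφ : u*(1 + Real.log ϰ) - 2*u*Real.log (max (u/s) 1) ≤ 3/2 * Real.sqrt ϰ * s := by
    rcases le_or_gt u s with h | h
    · have hmax : 0 ≤ Real.log (max (u/s) 1) := Real.log_nonneg (le_max_right _ _)
      have hc : 1 + Real.log ϰ ≤ 3/2 * Real.sqrt ϰ := by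
        have h2 := aux_logub (Real.sqrt ϰ) (le_of_lt hsq1)
        rw [Real.log_sqrt (le_of_lt hϰ0)] at h2
        linarith
      nlinarith [mul_nonneg hu hmax]
    · have h1us : 1 ≤ u / s := (one_le_div hs).2 (le_of_lt h)
      have hmax : max (u/s) 1 = u/s := max_eq_left h1us
      rw [hmax]
      have hu0 : 0 < u := lt_trans hs h
      set r : ℝ := Real.sqrt ϰ * Real.exp (-(1/2):ℝ) with hrdef
      have hr0 : 0 < r := by positivity
      have hlogr : Real.log r = (Real.log ϰ - 1)/2 := by
        rw [hrdef, Real.log_mul (by positivity) (Real.exp_ne_zero _), Real.log_exp,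
          Real.log_sqrt (le_of_lt hϰ0)]
        ring
      have hz0 : (0:ℝ) < u/(s*r) := by positivity
      have hlz : 1 - (s*r)/u ≤ Real.log (u/(s*r)) := by
        have h3 := Real.log_le_sub_one_of_pos (show (0:ℝ) < (u/(s*r))⁻¹ by positivity)
        rw [Real.log_inv, inv_div] at h3
        linarith
      have hsplit : Real.log (u/s) = Real.log (u/(s*r)) + Real.log r := by
        rw [← Real.log_mul (ne_of_gt hz0) (ne_of_gt hr0)]
        congr 1
        field_simp
      have hcancel : u * ((s*r)/u) = s*r := by field_simp
      have h2 : 2*u - 2*(s*r) + u*Real.log ϰ - u ≤ 2*u*Real.log (u/s) := by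
        have h4 := mul_le_mul_of_nonneg_left hlz (by positivity : (0:ℝ) ≤ 2*u)
        rw [hsplit, hlogr]
        nlinarith [h4, hcancel]
      have he : Real.exp (-(1/2):ℝ) ≤ 3/4 := by
        rw [Real.exp_neg]
        have h5 : (4:ℝ)/3 ≤ Real.exp (1/2) := by
          have := Real.add_one_le_exp (1/2 : ℝ); linarith
        rw [inv_le_comm₀ (Real.exp_pos _) (by norm_num)]
        linarith
      have hrb : 2*r ≤ 3/2 * Real.sqrt ϰ := by
        rw [hrdef]
        nlinarith [Real.sqrt_pos.2 hϰ0, he]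
      have h6 : s*(2*r) ≤ s*(3/2*Real.sqrt ϰ) := mul_le_mul_of_nonneg_left hrb (le_of_lt hs)
      nlinarith [h2, h6]
  have hlog1b : Real.log (1/b) = - Real.log b := by rw [one_div, Real.log_inv]
  rw [hlog1b] at hkbig
  linarith


lemma aux_exp_cubic (x : ℝ) (h0 : 0 ≤ x) (h1 : x ≤ 1) :
    1 - x + x^2/2 - (7/18)*x^3 ≤ Real.exp (-x) := by
  have habs : |(-x)| ≤ 1 := by rw [abs_neg, abs_of_nonneg h0]; exact h1
  have h := Real.exp_bound habs (n := 3) (by norm_num)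
  rw [show ∑ m ∈ Finset.range 3, (-x) ^ m / (m.factorial : ℝ) = 1 - x + x^2/2 by
    simp [Finset.sum_range_succ, Nat.factorial]; ring] at h
  rw [abs_neg, abs_of_nonneg h0] at h
  have h2 := (abs_sub_le_iff.1 h).2
  norm_num [Nat.factorial] at h2
  nlinarith [pow_nonneg h0 3, h2]

lemma aux_exp_half : Real.exp (1/2 : ℝ) ≤ 5/3 := by
  have h : Real.exp (1/2 : ℝ) * Real.exp (1/2 : ℝ) = Real.exp 1 := by
    rw [← Real.exp_add]; norm_num
  nlinarith [Real.exp_pos (1/2 : ℝ), Real.exp_one_lt_d9]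

set_option maxHeartbeats 1000000 in
lemma aux_point (a θ : ℝ) (ha : 0 < a) (ha3 : a ≤ 1/3) (hθ : -1 < θ)
    (hE : a * Real.exp θ < 1) :
    Real.log (1 - a * Real.exp θ) ≤ 2 * (1 + θ) * Real.log (1 - a/2) := by
  have hv : (0:ℝ) < 1 - a/2 := by linarith
  have hv1 : 1 - a/2 ≤ 1 := by linarith
  obtain ⟨q, hqdef⟩ : ∃ q : ℝ, q = (1 - a/2)^2 := ⟨_, rfl⟩
  have hq0 : 0 < q := by rw [hqdef]; positivity
  have hq1 : q = 1 - a + a^2/4 := by rw [hqdef]; ring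
  have hlnq : Real.log q = 2 * Real.log (1 - a/2) := by
    rw [hqdef, Real.log_pow]; push_cast; ring
  have hlo : Real.log (1 - a/2) ≤ -(a/2) := by
    have := Real.log_le_sub_one_of_pos hv; linarith
  have hup : -Real.log (1 - a/2) ≤ (1 - a/2)⁻¹ - 1 := by
    have := Real.log_le_sub_one_of_pos (inv_pos.2 hv)
    rwa [Real.log_inv] at this
  have hvinv : (1 - a/2) * (1 - a/2)⁻¹ = 1 := mul_inv_cancel₀ (ne_of_gt hv)
  have hE0 : 0 < 1 - a * Real.exp θ := by linarith
  have hlnq_neg : Real.log q ≤ -a := by rw [hlnq]; linarith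
  have hlnq_lb : -Real.log q ≤ a * (1 - a/2)⁻¹ := by
    rw [hlnq]
    nlinarith [hup, hvinv, hv]
  -- main claim : 1 - a * exp θ ≤ q ^ (1+θ)  (rpow)
  have hmain : 1 - a * Real.exp θ ≤ q ^ (1 + θ) := by
    rcases le_or_gt 0 θ with hθ0 | hθ0
    · -- θ ≥ 0
      have hqw : q ^ (1 + θ) = q * Real.exp (θ * Real.log q) := by
        rw [Real.rpow_def_of_pos hq0, show Real.log q * (1 + θ) = Real.log q + θ * Real.log q by ring,
          Real.exp_add, Real.exp_log hq0]
      have hqlnq : -a ≤ q * Real.log q := by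
        have h5 : q * (-Real.log q) ≤ q * (a * (1 - a/2)⁻¹) :=
          mul_le_mul_of_nonneg_left hlnq_lb (le_of_lt hq0)
        have h6 : q * (a * (1 - a/2)⁻¹) = a * (1 - a/2) := by
          rw [hqdef, sq]
          calc (1-a/2)*(1-a/2) * (a * (1-a/2)⁻¹)
              = a*(1-a/2) * ((1-a/2)*(1-a/2)⁻¹) := by ring
            _ = a*(1-a/2) := by rw [hvinv, mul_one]
        nlinarith [h5, h6]
      have hexp1 : 1 + θ * Real.log q ≤ Real.exp (θ * Real.log q) := by
        linarith [Real.add_one_le_exp (θ * Real.log q)]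
      have hexpθ : 1 + θ ≤ Real.exp θ := by linarith [Real.add_one_le_exp θ]
      have h7 : a * (1 + θ) ≤ a * Real.exp θ := mul_le_mul_of_nonneg_left hexpθ (le_of_lt ha)
      have h8 : q * (1 + θ * Real.log q) ≤ q ^ (1 + θ) := by
        rw [hqw]; exact mul_le_mul_of_nonneg_left hexp1 (le_of_lt hq0)
      have h9 : q - a * θ ≤ q * (1 + θ * Real.log q) := by nlinarith [hqlnq, hθ0]
      nlinarith [h7, h8, h9, sq_nonneg a]
    · rcases le_or_gt θ (-(1/2)) with hhalf | hhalf
      · -- θ ∈ (-1, -1/2]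
        have hqw : q ^ (1 + θ) = Real.exp ((1 + θ) * Real.log q) := by
          rw [Real.rpow_def_of_pos hq0]; ring_nf
        have hexp1 : 1 + (1 + θ) * Real.log q ≤ q ^ (1 + θ) := by
          rw [hqw]; linarith [Real.add_one_le_exp ((1 + θ) * Real.log q)]
        have hc : Real.exp (-(1/2):ℝ) * (3/2 + θ) ≤ Real.exp θ := by
          have h1 : (3/2 + θ) ≤ Real.exp (θ + 1/2) := by
            linarith [Real.add_one_le_exp (θ + 1/2)]
          have h2 : Real.exp (-(1/2):ℝ) * Real.exp (θ + 1/2) = Real.exp θ := by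
            rw [← Real.exp_add]; ring_nf
          calc Real.exp (-(1/2):ℝ) * (3/2 + θ)
              ≤ Real.exp (-(1/2):ℝ) * Real.exp (θ + 1/2) :=
                mul_le_mul_of_nonneg_left h1 (Real.exp_pos _).le
            _ = Real.exp θ := h2
        have hcv : (3/5 : ℝ) ≤ Real.exp (-(1/2):ℝ) := by
          rw [Real.exp_neg, show (3/5:ℝ) = (5/3)⁻¹ by norm_num]
          exact inv_anti₀ (Real.exp_pos _) aux_exp_half
        have hexθ : (3/5 : ℝ) * (3/2 + θ) ≤ Real.exp θ := by
          have h32 : (0:ℝ) ≤ 3/2 + θ := by linarith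
          calc (3/5:ℝ) * (3/2 + θ) ≤ Real.exp (-(1/2):ℝ) * (3/2 + θ) :=
                mul_le_mul_of_nonneg_right hcv h32
            _ ≤ Real.exp θ := hc
        have hkey : (1 + θ) * (a * (1 - a/2)⁻¹) ≤ a * Real.exp θ := by
          have hv56 : (5/6:ℝ) ≤ 1 - a/2 := by linarith
          have hinv65 : (1 - a/2)⁻¹ ≤ 6/5 := by
            rw [show (6/5:ℝ) = (5/6:ℝ)⁻¹ by norm_num]
            exact inv_anti₀ (by norm_num) hv56
          have hainv : a * (1 - a/2)⁻¹ ≤ a * (6/5) :=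
            mul_le_mul_of_nonneg_left hinv65 ha.le
          have h10 : (1 + θ) * (a * (6/5)) ≤ a * ((3/5) * (3/2 + θ)) := by
            nlinarith [mul_nonneg ha.le (show (0:ℝ) ≤ -(1/2) - θ by linarith)]
          have h11 : (1 + θ) * (a * (1 - a/2)⁻¹) ≤ (1 + θ) * (a * (6/5)) :=
            mul_le_mul_of_nonneg_left hainv (by linarith)
          have h12 : a * ((3/5) * (3/2 + θ)) ≤ a * Real.exp θ :=
            mul_le_mul_of_nonneg_left hexθ ha.le
          linarith
        have h13 : (1 + θ) * (-Real.log q) ≤ (1 + θ) * (a * (1 - a/2)⁻¹) :=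
          mul_le_mul_of_nonneg_left hlnq_lb (by linarith)
        nlinarith [hexp1, hkey, h13]
      · -- θ ∈ (-1/2, 0)
        obtain ⟨x, hxdef⟩ : ∃ x : ℝ, x = -θ := ⟨_, rfl⟩
        have hx0 : 0 < x := by rw [hxdef]; linarith
        have hx12 : x < 1/2 := by rw [hxdef]; linarith
        have hcub : 1 - x + x^2/2 - (7/18)*x^3 ≤ Real.exp θ := by
          have h := aux_exp_cubic x (le_of_lt hx0) (by linarith)
          rwa [show -x = θ by rw [hxdef]; ring] at h
        have hqw : q ^ (1 + θ) = q * Real.exp (θ * Real.log q) := by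
          rw [Real.rpow_def_of_pos hq0, show Real.log q * (1 + θ) = Real.log q + θ * Real.log q by ring,
            Real.exp_add, Real.exp_log hq0]
        have hexp1 : 1 + θ * Real.log q ≤ Real.exp (θ * Real.log q) := by
          linarith [Real.add_one_le_exp (θ * Real.log q)]
        have h8 : q * (1 + θ * Real.log q) ≤ q ^ (1 + θ) := by
          rw [hqw]; exact mul_le_mul_of_nonneg_left hexp1 (le_of_lt hq0)
        have h13 : a * x ≤ θ * Real.log q := by
          have h14 : θ * Real.log q = x * (-Real.log q) := by rw [hxdef]; ring
          rw [h14]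
          have h15 : x * a ≤ x * (-Real.log q) :=
            mul_le_mul_of_nonneg_left (by linarith) hx0.le
          linarith
        have hpoly : 1 - a * (1 - x + x^2/2 - (7/18)*x^3) ≤ q * (1 + a*x) := by
          rw [hq1]
          nlinarith [sq_nonneg (x - 1/2), mul_pos ha hx0,
            mul_nonneg (mul_nonneg ha.le ha.le) hx0.le,
            mul_nonneg (mul_nonneg hx0.le hx0.le) hx0.le,
            mul_nonneg (mul_nonneg hx0.le hx0.le) (show (0:ℝ) ≤ 1/2 - x by linarith),
            mul_nonneg (mul_nonneg ha.le hx0.le) (show (0:ℝ) ≤ 1/2 - x by linarith),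
            mul_nonneg (mul_nonneg (show (0:ℝ) ≤ 1/3 - a by linarith) hx0.le) hx0.le,
            mul_nonneg (mul_nonneg ha.le ha.le) (mul_nonneg hx0.le hx0.le)]
        have h14 : a * (1 - x + x^2/2 - (7/18)*x^3) ≤ a * Real.exp θ :=
          mul_le_mul_of_nonneg_left hcub (le_of_lt ha)
        have h15 : q * (1 + a*x) ≤ q * (1 + θ * Real.log q) :=
          mul_le_mul_of_nonneg_left (by linarith [h13]) (le_of_lt hq0)
        linarith [hpoly, h8, h14, h15]
  have hfin := Real.log_le_log hE0 hmain
  rwa [Real.log_rpow hq0, hlnq,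
    show (1+θ) * (2 * Real.log (1 - a/2)) = 2*(1+θ)*Real.log (1-a/2) by ring] at hfin

set_option maxHeartbeats 1000000 in
lemma aux_main (a b s ϰ K u u' : ℝ) (ha : 0 < a) (ha1 : a < 1) (hb : 0 < b) (hb1 : b ≤ 1)
    (hs : 0 < s) (hϰ : 1 < ϰ) (hK1 : 1 ≤ K)
    (hkbig : 2 * Real.log (1/b) + 2 * Real.sqrt ϰ * s ≤ K)
    (hu0 : 0 ≤ u) (huu' : u < u') (hu'K : u' < K)
    (hu'E : a * (b * (max (u'/s) 1) ^ (2*u') * (1/ϰ) ^ u') ^ ((K-u')⁻¹) < 1) :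
    (1 - a * (b * (max (u/s) 1) ^ (2*u) * (1/ϰ) ^ u) ^ ((K-u)⁻¹)) ^ (K-u)
      ≤ Real.exp (-(a/2) * (K - Real.sqrt ϰ * s)) ∧
    (a ≤ 1/3 → (1 - a * (b * (max (u/s) 1) ^ (2*u) * (1/ϰ) ^ u) ^ ((K-u)⁻¹)) ^ (K-u)
      ≤ (1 - a/2) ^ (K - Real.sqrt ϰ * s)) := by
  have hϰ0 : (0:ℝ) < ϰ := by linarith
  have hsq1 : 1 < Real.sqrt ϰ := by
    rw [show (1:ℝ) = Real.sqrt 1 by simp]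
    exact Real.sqrt_lt_sqrt (by norm_num) hϰ
  have hlogb : Real.log b ≤ 0 := Real.log_nonpos (le_of_lt hb) hb1
  have hloga : Real.log a < 0 := Real.log_neg ha ha1
  have hlogϰ : 0 < Real.log ϰ := Real.log_pos hϰ
  have hlog1b : Real.log (1/b) = - Real.log b := by rw [one_div, Real.log_inv]
  obtain ⟨D, hDdef⟩ : ∃ D : ℝ, D = (K - Real.sqrt ϰ * s)/2 := ⟨_, rfl⟩
  have hD0 : 0 < D := by
    rw [hDdef]; rw [hlog1b] at hkbig
    nlinarith [mul_pos (lt_trans one_pos hsq1) hs]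
  have hMpos : ∀ v : ℝ, (0:ℝ) < max (v/s) 1 := fun v => lt_of_lt_of_le one_pos (le_max_right _ _)
  have hXpos : ∀ v : ℝ, (0:ℝ) < b * (max (v / s) 1) ^ (2 * v) * (1 / ϰ) ^ v := by
    intro v
    have h1 := Real.rpow_pos_of_pos (hMpos v) (2*v)
    have h2 := Real.rpow_pos_of_pos (show (0:ℝ) < 1/ϰ by positivity) v
    positivity
  have hlogX : ∀ v : ℝ, Real.log (b * (max (v / s) 1) ^ (2 * v) * (1 / ϰ) ^ v)
      = Real.log b + 2*v*Real.log (max (v/s) 1) - v * Real.log ϰ := by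
    intro v
    rw [Real.log_mul (by positivity) (ne_of_gt (Real.rpow_pos_of_pos (by positivity) v)),
      Real.log_mul (ne_of_gt hb) (ne_of_gt (Real.rpow_pos_of_pos (hMpos v) (2*v))),
      Real.log_rpow (hMpos v), Real.log_rpow (by positivity), one_div, Real.log_inv]
    ring
  have huK : u < K := lt_trans huu' hu'K
  obtain ⟨m, hmdef⟩ : ∃ m : ℝ, m = K - u := ⟨_, rfl⟩
  have hm0 : 0 < m := by rw [hmdef]; linarith
  obtain ⟨lnX, hlnXdef⟩ : ∃ l : ℝ, l = Real.log b + 2*u*Real.log (max (u/s) 1) - u * Real.log ϰ := ⟨_, rfl⟩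
  -- step 1 : glog at u' is negative
  have hglog' : (K - u') * Real.log a +
      (Real.log b + 2*u'*Real.log (max (u'/s) 1) - u' * Real.log ϰ) < 0 := by
    have hlt := Real.log_neg (by positivity) hu'E
    rw [Real.log_mul (ne_of_gt ha) (ne_of_gt (Real.rpow_pos_of_pos (hXpos u') _)),
      Real.log_rpow (hXpos u'), hlogX u'] at hlt
    have hm' : (0:ℝ) < K - u' := by linarith
    have h5 := mul_lt_mul_of_pos_left hlt hm'
    rw [mul_zero, mul_add, ← mul_assoc, mul_inv_cancel₀ (ne_of_gt hm'), one_mul] at h5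
    linarith
  -- step 2 : glog at u is negative
  have hglog : m * Real.log a + lnX < 0 := by
    have hds : u / s ≤ u' / s := by gcongr
    have hMle : Real.log (max (u/s) 1) ≤ Real.log (max (u'/s) 1) :=
      Real.log_le_log (hMpos u) (max_le_max hds le_rfl)
    have h2u : 2*u*Real.log (max (u/s) 1) ≤ 2*u*Real.log (max (u'/s) 1) := by nlinarith
    have hg0 : K * Real.log a + Real.log b < 0 := by
      have := mul_le_mul_of_nonpos_right hK1 (le_of_lt hloga)
      rw [one_mul] at this
      linarith
    rcases le_or_gt (-Real.log a + 2*Real.log (max (u'/s) 1) - Real.log ϰ) 0 with hA | hA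
    · have hAu : u * (-Real.log a + 2*Real.log (max (u'/s) 1) - Real.log ϰ) ≤ 0 :=
        mul_nonpos_of_nonneg_of_nonpos hu0 hA
      rw [hmdef, hlnXdef]; nlinarith
    · have hle : u * (-Real.log a + 2*Real.log (max (u'/s) 1) - Real.log ϰ)
          ≤ u' * (-Real.log a + 2*Real.log (max (u'/s) 1) - Real.log ϰ) :=
        mul_le_mul_of_nonneg_right (le_of_lt huu') (le_of_lt hA)
      rw [hmdef, hlnXdef]; nlinarith
  -- E
  obtain ⟨E, hEdef⟩ : ∃ E : ℝ, E = a * (b * (max (u / s) 1) ^ (2 * u) * (1 / ϰ) ^ u) ^ ((K - u)⁻¹) := ⟨_, rfl⟩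
  have hEexp : E = Real.exp (Real.log a + lnX * m⁻¹) := by
    rw [hEdef, Real.rpow_def_of_pos (hXpos u), hlogX u, ← hlnXdef, ← hmdef,
      Real.exp_add, Real.exp_log ha]
  have hE0 : 0 < E := by rw [hEexp]; exact Real.exp_pos _
  have hElt1 : E < 1 := by
    rw [hEexp]
    have h6 : Real.log a + lnX * m⁻¹ < 0 := by
      have h7 : Real.log a + lnX * m⁻¹ = (m * Real.log a + lnX) / m := by field_simp
      rw [h7]
      exact div_neg_of_neg_of_pos hglog hm0
    calc Real.exp (Real.log a + lnX * m⁻¹) < Real.exp 0 := Real.exp_lt_exp.2 h6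
      _ = 1 := Real.exp_zero
  have h1E : 0 < 1 - E := by linarith
  have hElb : a * (1 + lnX * m⁻¹) ≤ E := by
    rw [hEexp, Real.exp_add, Real.exp_log ha]
    have h9 : 1 + lnX * m⁻¹ ≤ Real.exp (lnX * m⁻¹) := by
      linarith [Real.add_one_le_exp (lnX * m⁻¹)]
    exact mul_le_mul_of_nonneg_left h9 (le_of_lt ha)
  have hND : D ≤ m + lnX := by
    have := aux_keyB b s ϰ K u hb hb1 hs hϰ hu0 hkbig
    rw [hmdef, hlnXdef]; linarith
  have hN0 : 0 < m + lnX := lt_of_lt_of_le hD0 hND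
  have hmlnX : m * (1 + lnX * m⁻¹) = m + lnX := by field_simp
  have hζu : (1 - E) ^ (K - u) = Real.exp (Real.log (1 - E) * m) := by
    rw [← hmdef, Real.rpow_def_of_pos h1E]
  have hEm : a * D ≤ E * m := by
    have h1 : a * (1 + lnX * m⁻¹) * m ≤ E * m := mul_le_mul_of_nonneg_right hElb (le_of_lt hm0)
    have h2 : a * (1 + lnX * m⁻¹) * m = a * (m + lnX) := by
      rw [mul_assoc, mul_comm (1 + lnX * m⁻¹) m, hmlnX]
    nlinarith
  rw [← hEdef]
  constructor
  · rw [hζu]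
    apply Real.exp_le_exp.2
    have hlog1E : Real.log (1 - E) ≤ -E := by
      have := Real.log_le_sub_one_of_pos h1E
      linarith
    calc Real.log (1 - E) * m ≤ (-E) * m := mul_le_mul_of_nonneg_right hlog1E (le_of_lt hm0)
      _ ≤ -(a * D) := by linarith [hEm]
      _ = -(a/2) * (K - Real.sqrt ϰ * s) := by rw [hDdef]; ring
  · intro ha3
    obtain ⟨θ, hθdef⟩ : ∃ t : ℝ, t = lnX * m⁻¹ := ⟨_, rfl⟩
    have hmθ : m * θ = lnX := by rw [hθdef]; field_simp
    have hNθ : m * (1 + θ) = m + lnX := by rw [mul_add, mul_one, hmθ]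
    have hθ1 : -1 < θ := by
      by_contra hcon
      push_neg at hcon
      have hnp : m * (1 + θ) ≤ 0 := mul_nonpos_of_nonneg_of_nonpos hm0.le (by linarith)
      rw [hNθ] at hnp; linarith
    have hEθ : E = a * Real.exp θ := by
      rw [hEexp, hθdef, Real.exp_add, Real.exp_log ha]
    have hpt := aux_point a θ ha ha3 hθ1 (by rw [← hEθ]; exact hElt1)
    rw [← hEθ] at hpt
    have hlogneg : Real.log (1 - a/2) < 0 := Real.log_neg (by linarith) (by linarith)
    have hstep : Real.log (1 - E) * m ≤ 2 * (m + lnX) * Real.log (1 - a/2) := by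
      have h16 := mul_le_mul_of_nonneg_right hpt (le_of_lt hm0)
      calc Real.log (1 - E) * m ≤ 2 * (1 + θ) * Real.log (1 - a/2) * m := h16
        _ = 2 * (m * (1 + θ)) * Real.log (1 - a/2) := by ring
        _ = 2 * (m + lnX) * Real.log (1 - a/2) := by rw [hNθ]
    have hstep2 : 2 * (m + lnX) * Real.log (1 - a/2) ≤ 2 * D * Real.log (1 - a/2) := by
      nlinarith [hND, hlogneg]
    rw [hζu, Real.rpow_def_of_pos (by linarith : (0:ℝ) < 1 - a/2)]
    apply Real.exp_le_exp.2
    calc Real.log (1 - E) * m ≤ 2 * D * Real.log (1 - a/2) := le_trans hstep hstep2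
      _ = Real.log (1 - a/2) * (K - Real.sqrt ϰ * s) := by rw [hDdef]; ring

theorem stmt11 (a b s ϰ : ℝ) (ha : 0 < a) (ha1 : a < 1) (hb : 0 < b) (hb1 : b ≤ 1)
    (hs : 0 < s) (hϰ : 1 < ϰ) (k : ℕ) (hk : 1 ≤ k)
    (ubar : ℝ)
    (hubar : ubar = sSup {u : ℝ | 0 < u ∧ u < (k : ℝ) ∧
      a * (b * (max (u / s) 1) ^ (2 * u) * (1 / ϰ) ^ u) ^ ((k : ℝ) - u)⁻¹ < 1})
    (ζ : ℝ → ℝ)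
    (hζ : ∀ u : ℝ, ζ u =
      (1 - a * (b * (max (u / s) 1) ^ (2 * u) * (1 / ϰ) ^ u) ^ ((k : ℝ) - u)⁻¹) ^ ((k : ℝ) - u))
    (hkbig : 2 * Real.log (1 / b) + 2 * Real.sqrt ϰ * s ≤ (k : ℝ)) :
    (∀ u : ℝ, 0 ≤ u → u < ubar →
      ζ u ≤ Real.exp (-(a / 2) * ((k : ℝ) - Real.sqrt ϰ * s))) ∧
    (a ≤ 1 / 3 → ∀ u : ℝ, 0 ≤ u → u < ubar →
      ζ u ≤ (1 - a / 2) ^ ((k : ℝ) - Real.sqrt ϰ * s)) := by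
  have hK1 : (1:ℝ) ≤ (k:ℝ) := by exact_mod_cast hk
  have main : ∀ u : ℝ, 0 ≤ u → u < ubar →
      ζ u ≤ Real.exp (-(a/2) * ((k:ℝ) - Real.sqrt ϰ * s)) ∧
      (a ≤ 1/3 → ζ u ≤ (1 - a/2) ^ ((k:ℝ) - Real.sqrt ϰ * s)) := by
    intro u hu0 huub
    rw [hubar] at huub
    have hSne : Set.Nonempty {u : ℝ | 0 < u ∧ u < (k:ℝ) ∧
        a * (b * (max (u / s) 1) ^ (2 * u) * (1 / ϰ) ^ u) ^ ((k:ℝ) - u)⁻¹ < 1} := by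
      by_contra hemp
      rw [Set.not_nonempty_iff_eq_empty] at hemp
      rw [hemp, Real.sSup_empty] at huub
      linarith
    obtain ⟨u', hu'S, huu'⟩ := exists_lt_of_lt_csSup hSne huub
    obtain ⟨hu'0, hu'K, hu'E⟩ := hu'S
    have := aux_main a b s ϰ (k:ℝ) u u' ha ha1 hb hb1 hs hϰ hK1 hkbig hu0 huu' hu'K hu'E
    rw [hζ u]
    exact this
  exact ⟨fun u h1 h2 => (main u h1 h2).1, fun ha3 u h1 h2 => (main u h1 h2).2 ha3⟩
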